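/- Let X be a Lévy process, δ ≥ 0, 0 ≤ a < T, and 0 < c < ∞. Then P(X(t) ≤ 1 for all t ∈ [a,T]) = T^{−δ+o(1)} as T → ∞ if and only if P(X(t) ≤ c for all t ∈ [a,T]) = T^{−δ+o(1)} as T → ∞. -/

import Mathlib

open MeasureTheory ProbabilityTheory Set Filter

section AuxStmt6

variable {Ω : Type*} [MeasurableSpace Ω] {μ : Measure Ω} [IsProbabilityMeasure μ] {X : ℝ → Ω → ℝ}

lemma sum_ite_tele (n : ℕ) (w : ℕ → ℝ) (lo hi : ℕ) (hlo : lo ≤ hi + 1) (hhi : hi < n) :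
    (∑ l : Fin n, if lo ≤ (l : ℕ) ∧ (l : ℕ) ≤ hi then w ((l : ℕ) + 1) - w (l : ℕ) else 0)
      = w (hi + 1) - w lo := by
  rw [Fin.sum_univ_eq_sum_range (fun l => if lo ≤ l ∧ l ≤ hi then w (l + 1) - w l else 0)]
  rw [← Finset.sum_filter]
  have hfil : (Finset.range n).filter (fun l => lo ≤ l ∧ l ≤ hi) = Finset.Ico lo (hi + 1) := by
    ext l; simp only [Finset.mem_filter, Finset.mem_range, Finset.mem_Ico]; omega
  rw [hfil, Finset.sum_Ico_eq_sub _ hlo, Finset.sum_range_sub, Finset.sum_range_sub]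
  ring

lemma mapIncr_pi
    (hmeas : ∀ t, Measurable (X t))
    (hstat : ∀ s t : ℝ, 0 ≤ s → 0 ≤ t →
      IdentDistrib (fun ω => X (s + t) ω - X s ω) (X t) μ μ)
    (hindep : ∀ (n : ℕ) (τ : ℕ → ℝ), Monotone τ → (∀ i, 0 ≤ τ i) →
      iIndepFun
        (fun i : Fin n => fun ω => X (τ (i + 1)) ω - X (τ i) ω) μ)
    (n : ℕ) (τ σ : ℕ → ℝ) (hτ : Monotone τ) (hτ0 : ∀ i, 0 ≤ τ i)
    (hσ : Monotone σ) (hσ0 : ∀ i, 0 ≤ σ i)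
    (hdiff : ∀ l : ℕ, l < n → τ (l + 1) - τ l = σ (l + 1) - σ l) :
    μ.map (fun ω (i : Fin n) => X (τ ((i : ℕ) + 1)) ω - X (τ (i : ℕ)) ω)
      = μ.map (fun ω (i : Fin n) => X (σ ((i : ℕ) + 1)) ω - X (σ (i : ℕ)) ω) := by
  have key : ∀ (ρ : ℕ → ℝ), Monotone ρ → (∀ i, 0 ≤ ρ i) →
      μ.map (fun ω (i : Fin n) => X (ρ ((i : ℕ) + 1)) ω - X (ρ (i : ℕ)) ω)
        = Measure.pi (fun i : Fin n => μ.map (X (ρ ((i : ℕ) + 1) - ρ (i : ℕ)))) := by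
    intro ρ hρ hρ0
    haveI hpm : ∀ i : Fin n, IsProbabilityMeasure (μ.map (X (ρ ((i : ℕ) + 1) - ρ (i : ℕ)))) :=
      fun i => Measure.isProbabilityMeasure_map (hmeas _).aemeasurable
    have hvm : Measurable (fun ω (i : Fin n) => X (ρ ((i : ℕ) + 1)) ω - X (ρ (i : ℕ)) ω) :=
      measurable_pi_lambda _ fun i => (hmeas _).sub (hmeas _)
    refine (Measure.pi_eq fun A hA => ?_).symm
    rw [Measure.map_apply hvm (MeasurableSet.univ_pi hA)]
    have hpre : (fun ω (i : Fin n) => X (ρ ((i : ℕ) + 1)) ω - X (ρ (i : ℕ)) ω) ⁻¹' (univ.pi A)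
        = ⋂ i ∈ (Finset.univ : Finset (Fin n)),
            (fun ω => X (ρ ((i : ℕ) + 1)) ω - X (ρ (i : ℕ)) ω) ⁻¹' (A i) := by
      ext ω; simp [Set.mem_pi]
    rw [hpre, (hindep n ρ hρ hρ0).measure_inter_preimage_eq_mul Finset.univ (fun i _ => hA i)]
    refine Finset.prod_congr rfl fun i _ => ?_
    have hst : ρ (i : ℕ) + (ρ ((i : ℕ) + 1) - ρ (i : ℕ)) = ρ ((i : ℕ) + 1) := by ring
    have hid := hstat (ρ (i : ℕ)) (ρ ((i : ℕ) + 1) - ρ (i : ℕ)) (hρ0 _)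
      (by have := hρ (Nat.le_succ (i : ℕ)); linarith)
    rw [hst] at hid
    rw [← Measure.map_apply (f := fun ω => X (ρ ((i : ℕ) + 1)) ω - X (ρ (i : ℕ)) ω)
      ((hmeas _).sub (hmeas _)) (hA i), hid.map_eq]
  rw [key τ hτ hτ0, key σ hσ hσ0]
  congr 1
  funext i
  rw [hdiff (i : ℕ) i.isLt]

lemma shift_prob
    (hX0 : ∀ ω, X 0 ω = 0)
    (hmeas : ∀ t, Measurable (X t))
    (hstat : ∀ s t : ℝ, 0 ≤ s → 0 ≤ t →
      IdentDistrib (fun ω => X (s + t) ω - X s ω) (X t) μ μ)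
    (hindep : ∀ (n : ℕ) (τ : ℕ → ℝ), Monotone τ → (∀ i, 0 ≤ τ i) →
      iIndepFun
        (fun i : Fin n => fun ω => X (τ (i + 1)) ω - X (τ i) ω) μ)
    (s : ℝ) (hs : 0 ≤ s) (m : ℕ)
    (t : Fin m → ℝ) (ht : Monotone t) (ht0 : ∀ i, 0 ≤ t i) (lam : ℝ) :
    μ {ω | ∀ i, X (s + t i) ω - X s ω ≤ lam} = μ {ω | ∀ i, X (t i) ω ≤ lam} := by
  rcases Nat.eq_zero_or_pos m with rfl | hm
  · have h1 : {ω : Ω | ∀ i : Fin 0, X (s + t i) ω - X s ω ≤ lam} = univ := by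
      ext ω; simp
    have h2 : {ω : Ω | ∀ i : Fin 0, X (t i) ω ≤ lam} = univ := by
      ext ω; simp
    rw [h1, h2]
  -- the capped sequence of times
  set tc : ℕ → ℝ := fun l => if l = 0 then 0 else t ⟨min (l - 1) (m - 1), by omega⟩ with htc
  have htc0 : ∀ l, 0 ≤ tc l := by
    intro l
    by_cases h : l = 0
    · simp [htc, h]
    · simp only [htc, h, if_false]; exact ht0 _
  have htcmono : Monotone tc := by
    apply monotone_nat_of_le_succ
    intro l
    rcases Nat.eq_zero_or_pos l with rfl | hl
    · simpa [htc] using ht0 _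
    · have h1 : l ≠ 0 := Nat.pos_iff_ne_zero.mp hl
      simp only [htc, h1, if_false, Nat.succ_ne_zero]
      exact ht (by simp only [Fin.mk_le_mk]; omega)
  have htcsucc : ∀ i : Fin m, tc ((i : ℕ) + 1) = t i := by
    intro i
    have hi : (⟨min ((i : ℕ) + 1 - 1) (m - 1), by omega⟩ : Fin m) = i := by
      ext; simp only []; omega
    simp only [htc, Nat.succ_ne_zero, if_false, hi]
  have htczero : tc 0 = 0 := by simp [htc]
  -- the set in the product space
  set SetC : Set (Fin m → ℝ) :=
    {x | ∀ i : Fin m, (∑ l : Fin m, if (l : ℕ) ≤ (i : ℕ) then x l else 0) ≤ lam} with hSetC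
  have hSetCm : MeasurableSet SetC := by
    have hrw : SetC = ⋂ i : Fin m,
        {x : Fin m → ℝ | (∑ l : Fin m, if (l : ℕ) ≤ (i : ℕ) then x l else 0) ≤ lam} := by
      ext x; simp [hSetC]
    rw [hrw]
    refine MeasurableSet.iInter fun i => measurableSet_le
      (Finset.measurable_sum _ fun l _ => ?_) measurable_const
    by_cases h : (l : ℕ) ≤ (i : ℕ)
    · simpa [h] using measurable_pi_apply l
    · simpa [h] using (measurable_const : Measurable fun _ : Fin m → ℝ => (0 : ℝ))
  have key : ∀ s' : ℝ,
      μ {ω | ∀ i, X (s' + t i) ω - X s' ω ≤ lam}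
        = μ.map (fun ω (l : Fin m) => X (s' + tc ((l : ℕ) + 1)) ω - X (s' + tc (l : ℕ)) ω)
            SetC := by
    intro s'
    have hvm : Measurable
        (fun ω (l : Fin m) => X (s' + tc ((l : ℕ) + 1)) ω - X (s' + tc (l : ℕ)) ω) :=
      measurable_pi_lambda _ fun l => (hmeas _).sub (hmeas _)
    rw [Measure.map_apply hvm hSetCm]
    congr 1
    ext ω
    have hsum : ∀ i : Fin m,
        (∑ l : Fin m, if (l : ℕ) ≤ (i : ℕ)
            then X (s' + tc ((l : ℕ) + 1)) ω - X (s' + tc (l : ℕ)) ω else 0)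
          = X (s' + t i) ω - X s' ω := by
      intro i
      have h0 := sum_ite_tele m (fun l => X (s' + tc l) ω) 0 (i : ℕ) (Nat.zero_le _) i.isLt
      simp only [Nat.zero_le, true_and] at h0
      rw [h0, htcsucc i, htczero, add_zero]
    simp only [mem_preimage, hSetC, Set.mem_setOf_eq]
    exact forall_congr' fun i => by rw [hsum i]
  have hev0 : {ω | ∀ i, X (t i) ω ≤ lam} = {ω | ∀ i, X (0 + t i) ω - X 0 ω ≤ lam} := by
    ext ω; simp [hX0 ω, zero_add]
  rw [hev0, key s, key 0]
  congr 1
  exact mapIncr_pi hmeas hstat hindep m (fun l => s + tc l) (fun l => 0 + tc l)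
    (fun p q hpq => by dsimp only; linarith [htcmono hpq])
    (fun l => add_nonneg hs (htc0 l))
    (fun p q hpq => by dsimp only; linarith [htcmono hpq])
    (fun l => by linarith [htc0 l])
    (fun l _ => by ring)

lemma shift_prob_finset
    (hX0 : ∀ ω, X 0 ω = 0)
    (hmeas : ∀ t, Measurable (X t))
    (hstat : ∀ s t : ℝ, 0 ≤ s → 0 ≤ t →
      IdentDistrib (fun ω => X (s + t) ω - X s ω) (X t) μ μ)
    (hindep : ∀ (n : ℕ) (τ : ℕ → ℝ), Monotone τ → (∀ i, 0 ≤ τ i) →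
      iIndepFun
        (fun i : Fin n => fun ω => X (τ (i + 1)) ω - X (τ i) ω) μ)
    (s : ℝ) (hs : 0 ≤ s) (R : Finset ℝ) (hR0 : ∀ r ∈ R, 0 ≤ r) (lam : ℝ) :
    μ {ω | ∀ r ∈ R, X (s + r) ω - X s ω ≤ lam} = μ {ω | ∀ r ∈ R, X r ω ≤ lam} := by
  set e := R.orderIsoOfFin rfl with he
  have hmem : ∀ i : Fin R.card, ((e i : ℝ)) ∈ R := fun i => (e i).2
  have hsurj : ∀ r ∈ R, ∃ i : Fin R.card, (e i : ℝ) = r := fun r hr =>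
    ⟨e.symm ⟨r, hr⟩, by simp⟩
  have h1 : {ω | ∀ r ∈ R, X (s + r) ω - X s ω ≤ lam}
      = {ω | ∀ i : Fin R.card, X (s + (e i : ℝ)) ω - X s ω ≤ lam} := by
    ext ω
    constructor
    · intro h i; exact h _ (hmem i)
    · intro h r hr; obtain ⟨i, hi⟩ := hsurj r hr; rw [← hi]; exact h i
  have h2 : {ω | ∀ r ∈ R, X r ω ≤ lam}
      = {ω | ∀ i : Fin R.card, X (e i : ℝ) ω ≤ lam} := by
    ext ω
    constructor
    · intro h i; exact h _ (hmem i)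
    · intro h r hr; obtain ⟨i, hi⟩ := hsurj r hr; rw [← hi]; exact h i
  rw [h1, h2]
  exact shift_prob hX0 hmeas hstat hindep s hs R.card (fun i => (e i : ℝ))
    (fun i j hij => by exact_mod_cast e.monotone hij) (fun i => hR0 _ (hmem i)) lam

lemma indep_past_future
    (hX0 : ∀ ω, X 0 ω = 0)
    (hmeas : ∀ t, Measurable (X t))
    (hindep : ∀ (n : ℕ) (τ : ℕ → ℝ), Monotone τ → (∀ i, 0 ≤ τ i) →
      iIndepFun
        (fun i : Fin n => fun ω => X (τ (i + 1)) ω - X (τ i) ω) μ)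
    (s : ℝ) (hs : 0 ≤ s) (j q : ℕ)
    (p : Fin j → ℝ) (hp : Monotone p) (hp0 : ∀ i, 0 ≤ p i) (hps : ∀ i, p i ≤ s)
    (r : Fin q → ℝ) (hr : Monotone r) (hr0 : ∀ k, 0 ≤ r k) :
    IndepFun (fun ω (i : Fin j) => X (p i) ω)
             (fun ω (k : Fin q) => X (s + r k) ω - X s ω) μ := by
  set n := j + 1 + q with hn
  set τ : ℕ → ℝ := fun l =>
    if l = 0 then 0
    else if h : l - 1 < j then p ⟨l - 1, h⟩
    else if h2 : j + 2 ≤ l ∧ l - (j + 2) < q then s + r ⟨l - (j + 2), h2.2⟩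
    else if h3 : j + 2 ≤ l ∧ 0 < q then s + r ⟨q - 1, by omega⟩
    else s with hτdef
  have τ0 : τ 0 = 0 := by simp [hτdef]
  have τp : ∀ i : Fin j, τ ((i : ℕ) + 1) = p i := by
    intro i
    have h1 : (i : ℕ) + 1 ≠ 0 := Nat.succ_ne_zero _
    have h2 : (i : ℕ) + 1 - 1 < j := by omega
    simp only [hτdef, h1, if_false, dif_pos h2]
    have he : (⟨(i : ℕ) + 1 - 1, h2⟩ : Fin j) = i := Fin.ext (show (i : ℕ) + 1 - 1 = (i : ℕ) by omega)
    rw [he]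
  have τs : τ (j + 1) = s := by
    have h1 : j + 1 ≠ 0 := Nat.succ_ne_zero _
    have h2 : ¬ (j + 1 - 1 < j) := by omega
    have h3 : ¬ (j + 2 ≤ j + 1 ∧ j + 1 - (j + 2) < q) := by omega
    have h4 : ¬ (j + 2 ≤ j + 1 ∧ 0 < q) := by omega
    simp only [hτdef, h1, if_false, dif_neg h2, dif_neg h3, dif_neg h4]
  have τr : ∀ k : Fin q, τ (j + 2 + (k : ℕ)) = s + r k := by
    intro k
    have h1 : j + 2 + (k : ℕ) ≠ 0 := by omega
    have h2 : ¬ (j + 2 + (k : ℕ) - 1 < j) := by omega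
    have h3 : j + 2 ≤ j + 2 + (k : ℕ) ∧ j + 2 + (k : ℕ) - (j + 2) < q := ⟨by omega, by
      simpa using k.isLt⟩
    simp only [hτdef, h1, if_false, dif_neg h2, dif_pos h3]
    have he : (⟨j + 2 + (k : ℕ) - (j + 2), h3.2⟩ : Fin q) = k :=
      Fin.ext (show j + 2 + (k : ℕ) - (j + 2) = (k : ℕ) by omega)
    rw [he]
  have hτ0 : ∀ l, 0 ≤ τ l := by
    intro l
    simp only [hτdef]
    split_ifs
    · exact le_refl 0
    · exact hp0 _
    · exact add_nonneg hs (hr0 _)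
    · exact add_nonneg hs (hr0 _)
    · exact hs
  have hτmono : Monotone τ := by
    apply monotone_nat_of_le_succ
    intro l
    rcases Nat.eq_zero_or_pos l with rfl | hl
    · rw [τ0]; exact hτ0 1
    by_cases hA : l - 1 < j
    · -- τ l = p ⟨l-1⟩
      have h1 : l ≠ 0 := by omega
      by_cases hB : l < j
      · have h1' : l + 1 ≠ 0 := by omega
        have h2' : l + 1 - 1 < j := by omega
        simp only [hτdef, h1, if_false, dif_pos hA, h1', dif_pos h2']
        exact hp (by simp only [Fin.mk_le_mk]; omega)
      · -- l = j
        have hlj : l = j := by omega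
        have h1' : l + 1 ≠ 0 := by omega
        have h2' : ¬ (l + 1 - 1 < j) := by omega
        have h3' : ¬ (j + 2 ≤ l + 1 ∧ l + 1 - (j + 2) < q) := by omega
        have h4' : ¬ (j + 2 ≤ l + 1 ∧ 0 < q) := by omega
        simp only [hτdef, h1, if_false, dif_pos hA, h1', dif_neg h2', dif_neg h3', dif_neg h4']
        exact hps _
    · -- l ≥ j+1
      have h1 : l ≠ 0 := by omega
      have hlj : j + 1 ≤ l := by omega
      by_cases hC : l = j + 1
      · subst hC
        have h2 : ¬ (j + 1 - 1 < j) := by omega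
        have h3 : ¬ (j + 2 ≤ j + 1 ∧ j + 1 - (j + 2) < q) := by omega
        have h4 : ¬ (j + 2 ≤ j + 1 ∧ 0 < q) := by omega
        simp only [hτdef, h1, if_false, dif_neg h2, dif_neg h3, dif_neg h4]
        have h1' : j + 1 + 1 ≠ 0 := by omega
        have h2' : ¬ (j + 1 + 1 - 1 < j) := by omega
        by_cases hq : 0 < q
        · have h3' : j + 2 ≤ j + 1 + 1 ∧ j + 1 + 1 - (j + 2) < q := ⟨by omega, by omega⟩
          simp only [h1', if_false, dif_neg h2', dif_pos h3']
          exact le_add_of_nonneg_right (hr0 _)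
        · have h3' : ¬ (j + 2 ≤ j + 1 + 1 ∧ j + 1 + 1 - (j + 2) < q) := by omega
          have h4' : ¬ (j + 2 ≤ j + 1 + 1 ∧ 0 < q) := by omega
          simp only [h1', if_false, dif_neg h2', dif_neg h3', dif_neg h4']
          exact le_refl _
      · -- l ≥ j + 2
        have hlj2 : j + 2 ≤ l := by omega
        have h2 : ¬ (l - 1 < j) := by omega
        have h1' : l + 1 ≠ 0 := by omega
        have h2' : ¬ (l + 1 - 1 < j) := by omega
        by_cases hD : l - (j + 2) < q
        · have h3 : j + 2 ≤ l ∧ l - (j + 2) < q := ⟨hlj2, hD⟩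
          simp only [hτdef, h1, if_false, dif_neg h2, dif_pos h3]
          by_cases hE : l + 1 - (j + 2) < q
          · have h3' : j + 2 ≤ l + 1 ∧ l + 1 - (j + 2) < q := ⟨by omega, hE⟩
            simp only [h1', dif_neg h2', dif_pos h3', if_false]
            refine add_le_add le_rfl (hr ?_)
            simp only [Fin.mk_le_mk]; omega
          · have h3' : ¬ (j + 2 ≤ l + 1 ∧ l + 1 - (j + 2) < q) := by omega
            have h4' : j + 2 ≤ l + 1 ∧ 0 < q := ⟨by omega, by omega⟩
            simp only [h1', if_false, dif_neg h2', dif_neg h3', dif_pos h4']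
            refine add_le_add le_rfl (hr ?_)
            simp only [Fin.mk_le_mk]; omega
        · have h3 : ¬ (j + 2 ≤ l ∧ l - (j + 2) < q) := by omega
          have h3' : ¬ (j + 2 ≤ l + 1 ∧ l + 1 - (j + 2) < q) := by omega
          simp only [hτdef, h1, if_false, dif_neg h2, dif_neg h3, h1', dif_neg h2', dif_neg h3']
          by_cases hq : 0 < q
          · have h4 : j + 2 ≤ l ∧ 0 < q := ⟨hlj2, hq⟩
            have h4' : j + 2 ≤ l + 1 ∧ 0 < q := ⟨by omega, hq⟩
            simp only [dif_pos h4, dif_pos h4']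
            exact le_refl _
          · have h4 : ¬ (j + 2 ≤ l ∧ 0 < q) := by omega
            have h4' : ¬ (j + 2 ≤ l + 1 ∧ 0 < q) := by omega
            simp only [dif_neg h4, dif_neg h4']
            exact le_refl _
  have hiid := hindep n τ hτmono hτ0
  classical
  set S : Finset (Fin n) := Finset.univ.filter (fun l => (l : ℕ) < j) with hS
  set Tt : Finset (Fin n) := Finset.univ.filter (fun l => j + 1 ≤ (l : ℕ)) with hT
  have hST : Disjoint S Tt := by
    rw [Finset.disjoint_left]
    intro l hl hl'
    simp only [hS, hT, Finset.mem_filter, Finset.mem_univ, true_and] at hl hl'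
    omega
  have hfin := hiid.indepFun_finset S Tt hST (fun l => (hmeas _).sub (hmeas _))
  set g1 : (↥S → ℝ) → (Fin j → ℝ) := fun y i =>
    ∑ l : Fin n, if h : l ∈ S then (if (l : ℕ) ≤ (i : ℕ) then y ⟨l, h⟩ else 0) else 0 with hg1
  set g2 : (↥Tt → ℝ) → (Fin q → ℝ) := fun y k =>
    ∑ l : Fin n, if h : l ∈ Tt then (if (l : ℕ) ≤ j + 1 + (k : ℕ) then y ⟨l, h⟩ else 0) else 0
    with hg2
  have hg1m : Measurable g1 := by
    refine measurable_pi_lambda _ fun i => Finset.measurable_sum _ fun l _ => ?_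
    by_cases h : l ∈ S
    · by_cases h' : (l : ℕ) ≤ (i : ℕ)
      · simp only [dif_pos h, if_pos h']; exact measurable_pi_apply _
      · simp only [dif_pos h, if_neg h']; exact measurable_const
    · simp only [dif_neg h]; exact measurable_const
  have hg2m : Measurable g2 := by
    refine measurable_pi_lambda _ fun k => Finset.measurable_sum _ fun l _ => ?_
    by_cases h : l ∈ Tt
    · by_cases h' : (l : ℕ) ≤ j + 1 + (k : ℕ)
      · simp only [dif_pos h, if_pos h']; exact measurable_pi_apply _
      · simp only [dif_pos h, if_neg h']; exact measurable_const
    · simp only [dif_neg h]; exact measurable_const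
  have hcomp := hfin.comp hg1m hg2m
  have he1 : (g1 ∘ (fun a (i : ↥S) => X (τ (((i : Fin n) : ℕ) + 1)) a - X (τ ((i : Fin n) : ℕ)) a))
      = fun ω (i : Fin j) => X (p i) ω := by
    funext ω i
    show (∑ l : Fin n, if h : l ∈ S then
        (if (l : ℕ) ≤ (i : ℕ) then X (τ ((l : ℕ) + 1)) ω - X (τ (l : ℕ)) ω else 0) else 0)
      = X (p i) ω
    have hterm : ∀ l : Fin n, (if h : l ∈ S then
        (if (l : ℕ) ≤ (i : ℕ) then X (τ ((l : ℕ) + 1)) ω - X (τ (l : ℕ)) ω else 0) else 0)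
        = (if 0 ≤ (l : ℕ) ∧ (l : ℕ) ≤ (i : ℕ) then X (τ ((l : ℕ) + 1)) ω - X (τ (l : ℕ)) ω
            else 0) := by
      intro l
      by_cases h' : (l : ℕ) ≤ (i : ℕ)
      · have hmem : l ∈ S := by
          simp only [hS, Finset.mem_filter, Finset.mem_univ, true_and]
          have := i.isLt; omega
        rw [dif_pos hmem, if_pos h', if_pos ⟨Nat.zero_le _, h'⟩]
      · have hcond : ¬ (0 ≤ (l : ℕ) ∧ (l : ℕ) ≤ (i : ℕ)) := by omega
        rw [if_neg hcond]
        by_cases h : l ∈ S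
        · rw [dif_pos h, if_neg h']
        · rw [dif_neg h]
    rw [Finset.sum_congr rfl (fun l _ => hterm l)]
    rw [sum_ite_tele n (fun l => X (τ l) ω) 0 (i : ℕ) (Nat.zero_le _) (by have := i.isLt; omega)]
    rw [τp i, τ0, hX0 ω, sub_zero]
  have he2 : (g2 ∘ (fun a (k : ↥Tt) => X (τ (((k : Fin n) : ℕ) + 1)) a - X (τ ((k : Fin n) : ℕ)) a))
      = fun ω (k : Fin q) => X (s + r k) ω - X s ω := by
    funext ω k
    show (∑ l : Fin n, if h : l ∈ Tt then
        (if (l : ℕ) ≤ j + 1 + (k : ℕ) then X (τ ((l : ℕ) + 1)) ω - X (τ (l : ℕ)) ω else 0) else 0)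
      = X (s + r k) ω - X s ω
    have hterm : ∀ l : Fin n, (if h : l ∈ Tt then
        (if (l : ℕ) ≤ j + 1 + (k : ℕ) then X (τ ((l : ℕ) + 1)) ω - X (τ (l : ℕ)) ω else 0) else 0)
        = (if j + 1 ≤ (l : ℕ) ∧ (l : ℕ) ≤ j + 1 + (k : ℕ)
            then X (τ ((l : ℕ) + 1)) ω - X (τ (l : ℕ)) ω else 0) := by
      intro l
      by_cases h : l ∈ Tt
      · have hmem : j + 1 ≤ (l : ℕ) := by
          simpa only [hT, Finset.mem_filter, Finset.mem_univ, true_and] using h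
        by_cases h' : (l : ℕ) ≤ j + 1 + (k : ℕ)
        · rw [dif_pos h, if_pos h', if_pos ⟨hmem, h'⟩]
        · rw [dif_pos h, if_neg h', if_neg (by omega)]
      · have hmem : ¬ (j + 1 ≤ (l : ℕ)) := by
          intro hc
          exact h (by simp only [hT, Finset.mem_filter, Finset.mem_univ, true_and]; exact hc)
        rw [dif_neg h, if_neg (by omega)]
    rw [Finset.sum_congr rfl (fun l _ => hterm l)]
    rw [sum_ite_tele n (fun l => X (τ l) ω) (j + 1) (j + 1 + (k : ℕ)) (by omega)
      (by have := k.isLt; omega)]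
    have harg : j + 1 + (k : ℕ) + 1 = j + 2 + (k : ℕ) := by omega
    rw [harg, τr k, τs]
  rw [← he1, ← he2]
  exact hcomp

/-- Countable right-determination of a one-sided-continuous function's sup-event. -/
lemma pt_event_eq (g : ℝ → ℝ) (u v lam : ℝ) (D : Set ℝ)
    (hDsub : D ⊆ Icc u v) (hv : u ≤ v → v ∈ D)
    (hdense : ∀ t, u ≤ t → t < v → ∀ ε > 0, ∃ d ∈ D, t < d ∧ d < t + ε)
    (hg : ∀ t ∈ Ico u v, Tendsto g (nhdsWithin t (Ici t)) (nhds (g t))) :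
    (∀ t ∈ Icc u v, g t ≤ lam) ↔ (∀ t ∈ D, g t ≤ lam) := by
  constructor
  · exact fun h t ht => h t (hDsub ht)
  · intro h t ht
    rcases eq_or_lt_of_le ht.2 with rfl | htv
    · exact h t (hv ht.1)
    · have hcl : t ∈ closure (D ∩ Ioi t) := by
        rw [Metric.mem_closure_iff]
        intro ε hε
        obtain ⟨d, hd, htd, hdε⟩ := hdense t ht.1 htv ε hε
        exact ⟨d, ⟨hd, htd⟩, by rw [Real.dist_eq, abs_sub_lt_iff]; constructor <;> linarith⟩
      have hne : (nhdsWithin t (D ∩ Ioi t)).NeBot := mem_closure_iff_nhdsWithin_neBot.mp hcl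
      have htend : Tendsto g (nhdsWithin t (D ∩ Ioi t)) (nhds (g t)) :=
        (hg t ⟨ht.1, htv⟩).mono_left (nhdsWithin_mono t (fun x hx => Set.mem_Ici.mpr (le_of_lt hx.2)))
      refine le_of_tendsto htend ?_
      filter_upwards [self_mem_nhdsWithin] with x hx
      exact h x hx.1

/-- The standard countable set: rationals in `[u,v]` together with the endpoints. -/
def DSet (u v : ℝ) : Set ℝ := Icc u v ∩ ({u, v} ∪ Set.range ((↑·) : ℚ → ℝ))

lemma DSet_countable (u v : ℝ) : (DSet u v).Countable := by
  apply Set.Countable.mono (inter_subset_right : DSet u v ⊆ _)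
  exact (((countable_singleton v).insert u).union (countable_range _))

lemma DSet_subset (u v : ℝ) : DSet u v ⊆ Icc u v := inter_subset_left

lemma DSet_mem_left {u v : ℝ} (h : u ≤ v) : u ∈ DSet u v :=
  ⟨⟨le_refl u, h⟩, Or.inl (Or.inl rfl)⟩

lemma DSet_mem_right {u v : ℝ} (h : u ≤ v) : v ∈ DSet u v :=
  ⟨⟨h, le_refl v⟩, Or.inl (Or.inr rfl)⟩

lemma DSet_dense (u v : ℝ) : ∀ t, u ≤ t → t < v → ∀ ε > 0, ∃ d ∈ DSet u v, t < d ∧ d < t + ε := by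
  intro t htu htv ε hε
  obtain ⟨q, hq1, hq2⟩ := exists_rat_btwn (lt_min_iff.mpr ⟨htv, by linarith⟩ : t < min v (t + ε))
  refine ⟨(q : ℝ), ⟨⟨by linarith, le_of_lt (lt_of_lt_of_le hq2 (min_le_left _ _))⟩,
    Or.inr ⟨q, rfl⟩⟩, hq1, lt_of_lt_of_le hq2 (min_le_right _ _)⟩

lemma event_eq_biInter
    (hcadlag : ∀ ω, ∀ t ≥ (0 : ℝ),
      Filter.Tendsto (fun s => X s ω) (nhdsWithin t (Set.Ici t)) (nhds (X t ω)))
    (u v lam : ℝ) (hu : 0 ≤ u) :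
    {ω | ∀ t ∈ Icc u v, X t ω ≤ lam} = ⋂ t ∈ DSet u v, {ω | X t ω ≤ lam} := by
  ext ω
  simp only [mem_setOf_eq, mem_iInter]
  exact pt_event_eq (fun t => X t ω) u v lam (DSet u v) (DSet_subset u v)
    (fun h => DSet_mem_right h) (DSet_dense u v)
    (fun t ht => hcadlag ω t (le_trans hu ht.1))

lemma event_meas
    (hmeas : ∀ t, Measurable (X t))
    (hcadlag : ∀ ω, ∀ t ≥ (0 : ℝ),
      Filter.Tendsto (fun s => X s ω) (nhdsWithin t (Set.Ici t)) (nhds (X t ω)))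
    (u v lam : ℝ) (hu : 0 ≤ u) :
    MeasurableSet {ω | ∀ t ∈ Icc u v, X t ω ≤ lam} := by
  rw [event_eq_biInter hcadlag u v lam hu]
  exact MeasurableSet.biInter (DSet_countable u v)
    (fun t _ => measurableSet_le (hmeas t) measurable_const)

lemma event_eq_biInter_sub
    (hcadlag : ∀ ω, ∀ t ≥ (0 : ℝ),
      Filter.Tendsto (fun s => X s ω) (nhdsWithin t (Set.Ici t)) (nhds (X t ω)))
    (x v lam : ℝ) (hx : 0 ≤ x) :
    {ω | ∀ t ∈ Icc x v, X t ω - X x ω ≤ lam}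
      = ⋂ t ∈ DSet x v, {ω | X t ω - X x ω ≤ lam} := by
  ext ω
  simp only [mem_setOf_eq, mem_iInter]
  exact pt_event_eq (fun t => X t ω - X x ω) x v lam (DSet x v) (DSet_subset x v)
    (fun h => DSet_mem_right h) (DSet_dense x v)
    (fun t ht => Tendsto.sub_const (hcadlag ω t (le_trans hx ht.1)) _)

lemma PF_key
    (hX0 : ∀ ω, X 0 ω = 0)
    (hmeas : ∀ t, Measurable (X t))
    (hcadlag : ∀ ω, ∀ t ≥ (0 : ℝ),
      Filter.Tendsto (fun s => X s ω) (nhdsWithin t (Set.Ici t)) (nhds (X t ω)))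
    (hstat : ∀ s t : ℝ, 0 ≤ s → 0 ≤ t →
      IdentDistrib (fun ω => X (s + t) ω - X s ω) (X t) μ μ)
    (hindep : ∀ (n : ℕ) (τ : ℕ → ℝ), Monotone τ → (∀ i, 0 ≤ τ i) →
      iIndepFun
        (fun i : Fin n => fun ω => X (τ (i + 1)) ω - X (τ i) ω) μ)
    (a lam T : ℝ) (ha : 0 ≤ a) (x : ℝ) (hax : a ≤ x) (hxT2 : x ≤ T / 2)
    (Gf : Finset ℝ) (hGf : ∀ y ∈ Gf, a ≤ y) :
    μ ({ω | lam < X x ω ∧ ∀ y ∈ Gf, y < x → X y ω ≤ lam}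
        ∩ {ω | ∀ t ∈ Icc x T, X t ω - X x ω ≤ lam})
      ≤ μ {ω | lam < X x ω ∧ ∀ y ∈ Gf, y < x → X y ω ≤ lam}
        * μ {ω | ∀ t ∈ Icc a (T / 2), X t ω ≤ lam} := by
  classical
  have hx0 : 0 ≤ x := le_trans ha hax
  have hT0 : 0 ≤ T := by linarith
  have hxT : x ≤ T := by linarith
  set P : Set Ω := {ω | lam < X x ω ∧ ∀ y ∈ Gf, y < x → X y ω ≤ lam} with hP
  set F : Set Ω := {ω | ∀ t ∈ Icc x T, X t ω - X x ω ≤ lam} with hF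
  set B : Set Ω := {ω | ∀ t ∈ Icc a (T / 2), X t ω ≤ lam} with hB
  -- enumerate the countable determining set of [x, T]
  obtain ⟨e', hDe'⟩ := (DSet_countable x T).exists_eq_range ⟨x, DSet_mem_left hxT⟩
  set R : ℕ → Finset ℝ := fun nn => (Finset.range (nn + 1)).image (fun i => e' i - x) with hR
  have hRmem : ∀ nn, ∀ r ∈ R nn, ∃ t ∈ DSet x T, r = t - x := by
    intro nn r hr
    simp only [hR, Finset.mem_image, Finset.mem_range] at hr
    obtain ⟨i, _, hi⟩ := hr
    exact ⟨e' i, by rw [hDe']; exact ⟨i, rfl⟩, hi.symm⟩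
  have hR0 : ∀ nn, ∀ r ∈ R nn, 0 ≤ r := by
    intro nn r hr
    obtain ⟨t, ht, rfl⟩ := hRmem nn r hr
    have := (DSet_subset x T ht).1
    linarith
  have hRmono : ∀ nn, R nn ⊆ R (nn + 1) := by
    intro nn
    apply Finset.image_subset_image
    intro i hi
    simp only [Finset.mem_range] at hi ⊢
    omega
  set FR : ℕ → Set Ω := fun nn => {ω | ∀ r ∈ R nn, X (x + r) ω - X x ω ≤ lam} with hFR
  set UR : ℕ → Set Ω := fun nn => {ω | ∀ r ∈ R nn, X r ω ≤ lam} with hUR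
  have hFRm : ∀ nn, MeasurableSet (FR nn) := by
    intro nn
    have : FR nn = ⋂ r ∈ (R nn : Set ℝ), {ω | X (x + r) ω - X x ω ≤ lam} := by
      ext ω; simp [hFR, mem_iInter]
    rw [this]
    exact MeasurableSet.biInter (R nn).countable_toSet
      (fun r _ => measurableSet_le ((hmeas _).sub (hmeas _)) measurable_const)
  have hURm : ∀ nn, MeasurableSet (UR nn) := by
    intro nn
    have : UR nn = ⋂ r ∈ (R nn : Set ℝ), {ω | X r ω ≤ lam} := by
      ext ω; simp [hUR, mem_iInter]
    rw [this]
    exact MeasurableSet.biInter (R nn).countable_toSet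
      (fun r _ => measurableSet_le (hmeas _) measurable_const)
  have hFRanti : Antitone FR := by
    apply antitone_nat_of_succ_le
    intro nn ω hω r hr
    exact hω r (hRmono nn hr)
  have hURanti : Antitone UR := by
    apply antitone_nat_of_succ_le
    intro nn ω hω r hr
    exact hω r (hRmono nn hr)
  have hFcap : (⋂ nn, FR nn) = F := by
    rw [hF, event_eq_biInter_sub hcadlag x T lam hx0]
    ext ω
    simp only [mem_iInter, hFR, mem_setOf_eq]
    constructor
    · intro h t ht
      rw [hDe'] at ht
      obtain ⟨i, rfl⟩ := ht
      have := h i (e' i - x) (by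
        simp only [hR, Finset.mem_image, Finset.mem_range]
        exact ⟨i, by omega, rfl⟩)
      rwa [add_sub_cancel] at this
    · intro h nn r hr
      obtain ⟨t, ht, rfl⟩ := hRmem nn r hr
      rw [add_sub_cancel]
      exact h t ht
  have hUcap : (⋂ nn, UR nn) = {ω | ∀ u ∈ Icc 0 (T - x), X u ω ≤ lam} := by
    have h1 : (⋂ nn, UR nn) = {ω | ∀ t ∈ DSet x T, X (t - x) ω ≤ lam} := by
      ext ω
      simp only [mem_iInter, hUR, mem_setOf_eq]
      constructor
      · intro h t ht
        rw [hDe'] at ht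
        obtain ⟨i, rfl⟩ := ht
        exact h i (e' i - x) (by
          simp only [hR, Finset.mem_image, Finset.mem_range]
          exact ⟨i, by omega, rfl⟩)
      · intro h nn r hr
        obtain ⟨t, ht, rfl⟩ := hRmem nn r hr
        exact h t ht
    rw [h1]
    ext ω
    simp only [mem_setOf_eq]
    have := pt_event_eq (fun u => X u ω) 0 (T - x) lam ((fun t => t - x) '' DSet x T)
      (by
        rintro r ⟨t, ht, rfl⟩
        have h2 := DSet_subset x T ht
        exact ⟨by simp only; linarith [h2.1], by simp only; linarith [h2.2]⟩)
      (fun h => ⟨T, DSet_mem_right hxT, rfl⟩)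
      (by
        intro t ht0 htv ε hε
        obtain ⟨d, hd, hd1, hd2⟩ := DSet_dense x T (t + x) (by linarith) (by linarith) ε hε
        exact ⟨d - x, ⟨d, hd, rfl⟩, by linarith, by linarith⟩)
      (fun t ht => hcadlag ω t ht.1)
    rw [this]
    constructor
    · rintro h r ⟨t, ht, rfl⟩
      exact h t ht
    · intro h t ht
      exact h (t - x) ⟨t, ht, rfl⟩
  have hshift : ∀ nn, μ (FR nn) = μ (UR nn) :=
    fun nn => shift_prob_finset hX0 hmeas hstat hindep x hx0 (R nn) (hR0 nn) lam
  have htendFR : Tendsto (fun nn => μ (FR nn)) atTop (nhds (μ F)) := by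
    rw [← hFcap]
    exact tendsto_measure_iInter_atTop (fun nn => (hFRm nn).nullMeasurableSet) hFRanti
      ⟨0, measure_ne_top μ _⟩
  have htendUR : Tendsto (fun nn => μ (UR nn)) atTop
      (nhds (μ {ω | ∀ u ∈ Icc 0 (T - x), X u ω ≤ lam})) := by
    rw [← hUcap]
    exact tendsto_measure_iInter_atTop (fun nn => (hURm nn).nullMeasurableSet) hURanti
      ⟨0, measure_ne_top μ _⟩
  have hFU : μ F = μ {ω | ∀ u ∈ Icc 0 (T - x), X u ω ≤ lam} := by
    refine tendsto_nhds_unique ?_ htendUR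
    have : (fun nn => μ (FR nn)) = fun nn => μ (UR nn) := funext hshift
    rwa [this] at htendFR
  have hB'B : μ {ω | ∀ u ∈ Icc 0 (T - x), X u ω ≤ lam} ≤ μ B := by
    apply measure_mono
    intro ω hω t ht
    exact hω t ⟨by linarith [ht.1], by linarith [ht.2]⟩
  -- independence of P and each FR nn
  have hPm : MeasurableSet P := by
    have : P = (X x) ⁻¹' (Ioi lam) ∩ ⋂ y ∈ ((Gf.filter (fun y => y < x)) : Set ℝ),
        (X y) ⁻¹' (Iic lam) := by
      ext ω
      simp only [hP, mem_setOf_eq, mem_inter_iff, mem_preimage, mem_Ioi, mem_Iic, mem_iInter,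
        Finset.coe_filter, Finset.mem_coe, Finset.mem_filter, mem_setOf_eq]
      constructor
      · rintro ⟨h1, h2⟩
        exact ⟨h1, fun y hy => h2 y hy.1 hy.2⟩
      · rintro ⟨h1, h2⟩
        exact ⟨h1, fun y hy hyx => h2 y ⟨hy, hyx⟩⟩
    rw [this]
    exact ((hmeas x) measurableSet_Ioi).inter
      (MeasurableSet.biInter (Finset.countable_toSet _)
        (fun y _ => (hmeas y) measurableSet_Iic))
  have hindPF : ∀ nn, μ (P ∩ FR nn) = μ P * μ (FR nn) := by
    intro nn
    set Pts : Finset ℝ := insert x (Gf.filter (fun y => y < x)) with hPts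
    set eP := Pts.orderIsoOfFin rfl with heP
    set p : Fin Pts.card → ℝ := fun i => (eP i : ℝ) with hp
    have hpmem : ∀ i, p i ∈ Pts := fun i => (eP i).2
    have hpmono : Monotone p := fun i j hij => Subtype.coe_le_coe.mpr (eP.monotone hij)
    have hp0 : ∀ i, 0 ≤ p i := by
      intro i
      have hm := hpmem i
      simp only [hPts, Finset.mem_insert, Finset.mem_filter] at hm
      rcases hm with h | h
      · rw [h]; exact hx0
      · exact le_trans ha (hGf _ h.1)
    have hps : ∀ i, p i ≤ x := by
      intro i
      have hm := hpmem i
      simp only [hPts, Finset.mem_insert, Finset.mem_filter] at hm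
      rcases hm with h | h
      · rw [h]
      · exact le_of_lt h.2
    have hpsurj : ∀ y ∈ Pts, ∃ i, p i = y := fun y hy =>
      ⟨eP.symm ⟨y, hy⟩, by
        show ((eP (eP.symm ⟨y, hy⟩) : { z // z ∈ Pts }) : ℝ) = y
        rw [OrderIso.apply_symm_apply]⟩
    set eR := (R nn).orderIsoOfFin rfl with heR
    set rr : Fin (R nn).card → ℝ := fun k => (eR k : ℝ) with hrr
    have hrmem : ∀ k, rr k ∈ R nn := fun k => (eR k).2
    have hrmono : Monotone rr := fun i j hij => Subtype.coe_le_coe.mpr (eR.monotone hij)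
    have hrr0 : ∀ k, 0 ≤ rr k := fun k => hR0 nn _ (hrmem k)
    have hrsurj : ∀ r ∈ R nn, ∃ k, rr k = r := fun r hr =>
      ⟨eR.symm ⟨r, hr⟩, by
        show ((eR (eR.symm ⟨r, hr⟩) : { z // z ∈ R nn }) : ℝ) = r
        rw [OrderIso.apply_symm_apply]⟩
    have hind := indep_past_future hX0 hmeas hindep x hx0 Pts.card (R nn).card p hpmono hp0 hps
      rr hrmono hrr0
    set SA : Set (Fin Pts.card → ℝ) :=
      {y | ∀ i, (p i < x → y i ≤ lam) ∧ (¬ p i < x → lam < y i)} with hSA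
    set SB : Set (Fin (R nn).card → ℝ) := {y | ∀ k, y k ≤ lam} with hSB
    have hSAm : MeasurableSet SA := by
      have h0 : SA = ⋂ i, {y : Fin Pts.card → ℝ |
          (p i < x → y i ≤ lam) ∧ (¬ p i < x → lam < y i)} := by
        ext y; simp only [hSA, mem_setOf_eq, mem_iInter]
      rw [h0]
      refine MeasurableSet.iInter fun i => ?_
      by_cases h : p i < x
      · have h1 : {y : Fin Pts.card → ℝ | (p i < x → y i ≤ lam) ∧ (¬ p i < x → lam < y i)}
            = {y | y i ≤ lam} := by
          ext y; simp [h]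
        rw [h1]; exact measurableSet_le (measurable_pi_apply i) measurable_const
      · have h1 : {y : Fin Pts.card → ℝ | (p i < x → y i ≤ lam) ∧ (¬ p i < x → lam < y i)}
            = {y | lam < y i} := by
          ext y; simp [h]
        rw [h1]; exact measurableSet_lt measurable_const (measurable_pi_apply i)
    have hSBm : MeasurableSet SB := by
      have h0 : SB = ⋂ k, {y : Fin (R nn).card → ℝ | y k ≤ lam} := by
        ext y; simp only [hSB, mem_setOf_eq, mem_iInter]
      rw [h0]
      exact MeasurableSet.iInter fun k => measurableSet_le (measurable_pi_apply k) measurable_const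
    have hPA : P = (fun ω (i : Fin Pts.card) => X (p i) ω) ⁻¹' SA := by
      ext ω
      simp only [hP, mem_setOf_eq, mem_preimage, hSA]
      constructor
      · rintro ⟨h1, h2⟩ i
        constructor
        · intro hpi
          have hm := hpmem i
          simp only [hPts, Finset.mem_insert, Finset.mem_filter] at hm
          rcases hm with h | h
          · exact absurd hpi (by rw [h]; exact lt_irrefl x)
          · exact h2 _ h.1 hpi
        · intro hpi
          have hpx : p i = x := le_antisymm (hps i) (not_lt.mp hpi)
          rw [hpx]; exact h1
      · intro h
        constructor
        · obtain ⟨i, hi⟩ := hpsurj x (Finset.mem_insert_self x _)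
          have := (h i).2 (by rw [hi]; exact lt_irrefl x)
          rwa [hi] at this
        · intro y hy hyx
          obtain ⟨i, hi⟩ := hpsurj y
            (Finset.mem_insert_of_mem (Finset.mem_filter.mpr ⟨hy, hyx⟩))
          have := (h i).1 (by rw [hi]; exact hyx)
          rwa [hi] at this
    have hFB : FR nn = (fun ω (k : Fin (R nn).card) => X (x + rr k) ω - X x ω) ⁻¹' SB := by
      ext ω
      simp only [hFR, mem_setOf_eq, mem_preimage, hSB]
      constructor
      · intro h k; exact h _ (hrmem k)
      · intro h r hr
        obtain ⟨k, hk⟩ := hrsurj r hr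
        rw [← hk]; exact h k
    rw [hPA, hFB]
    exact hind.measure_inter_preimage_eq_mul SA SB hSAm hSBm
  -- conclude
  have hcapPF : (⋂ nn, P ∩ FR nn) = P ∩ F := by rw [← inter_iInter, hFcap]
  have htendPF : Tendsto (fun nn => μ (P ∩ FR nn)) atTop (nhds (μ (P ∩ F))) := by
    rw [← hcapPF]
    exact tendsto_measure_iInter_atTop
      (fun nn => (hPm.inter (hFRm nn)).nullMeasurableSet)
      (fun i j hij => inter_subset_inter_right _ (hFRanti hij)) ⟨0, measure_ne_top μ _⟩
  have htendPF2 : Tendsto (fun nn => μ P * μ (FR nn)) atTop (nhds (μ P * μ F)) :=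
    ENNReal.Tendsto.const_mul htendFR (Or.inr (measure_ne_top μ _))
  have hPF : μ (P ∩ F) = μ P * μ F := by
    refine tendsto_nhds_unique ?_ htendPF2
    have : (fun nn => μ (P ∩ FR nn)) = fun nn => μ P * μ (FR nn) := funext hindPF
    rwa [this] at htendPF
  rw [hPF]
  exact mul_le_mul_right (le_trans (le_of_eq hFU) hB'B) _

lemma step_ineq
    (hX0 : ∀ ω, X 0 ω = 0)
    (hmeas : ∀ t, Measurable (X t))
    (hcadlag : ∀ ω, ∀ t ≥ (0 : ℝ),
      Filter.Tendsto (fun s => X s ω) (nhdsWithin t (Set.Ici t)) (nhds (X t ω)))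
    (hstat : ∀ s t : ℝ, 0 ≤ s → 0 ≤ t →
      IdentDistrib (fun ω => X (s + t) ω - X s ω) (X t) μ μ)
    (hindep : ∀ (n : ℕ) (τ : ℕ → ℝ), Monotone τ → (∀ i, 0 ≤ τ i) →
      iIndepFun
        (fun i : Fin n => fun ω => X (τ (i + 1)) ω - X (τ i) ω) μ)
    (a lam T : ℝ) (ha : 0 ≤ a) (haT : a ≤ T / 2) :
    μ {ω | ∀ t ∈ Icc a T, X t ω ≤ 2 * lam}
      ≤ 2 * μ {ω | ∀ t ∈ Icc a (T / 2), X t ω ≤ lam} := by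
  classical
  have hT0 : 0 ≤ T := by linarith
  set A : Set Ω := {ω | ∀ t ∈ Icc a T, X t ω ≤ 2 * lam} with hA
  set B : Set Ω := {ω | ∀ t ∈ Icc a (T / 2), X t ω ≤ lam} with hB
  have hAm : MeasurableSet A := event_meas hmeas hcadlag a T (2 * lam) ha
  obtain ⟨e, hDe⟩ := (DSet_countable a (T / 2)).exists_eq_range ⟨a, DSet_mem_left haT⟩
  set G : ℕ → Finset ℝ := fun nn => (Finset.range (nn + 1)).image e with hG
  have hGmem : ∀ nn, ∀ y ∈ G nn, y ∈ DSet a (T / 2) := by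
    intro nn y hy
    simp only [hG, Finset.mem_image, Finset.mem_range] at hy
    obtain ⟨i, _, rfl⟩ := hy
    rw [hDe]; exact ⟨i, rfl⟩
  have hGmono : ∀ nn, G nn ⊆ G (nn + 1) := by
    intro nn
    apply Finset.image_subset_image
    intro i hi
    simp only [Finset.mem_range] at hi ⊢
    omega
  set E : ℕ → Set Ω := fun nn => A ∩ {ω | ∃ y ∈ G nn, lam < X y ω} with hE
  have hEmono : Monotone E := by
    apply monotone_nat_of_le_succ
    intro nn ω hω
    refine ⟨hω.1, ?_⟩
    obtain ⟨y, hy, hly⟩ := hω.2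
    exact ⟨y, hGmono nn hy, hly⟩
  -- covering
  have hcov : A ⊆ B ∪ ⋃ nn, E nn := by
    intro ω hω
    by_cases hωB : ω ∈ B
    · exact Or.inl hωB
    · right
      have hnot : ¬ (∀ t ∈ DSet a (T / 2), X t ω ≤ lam) := by
        intro hcon
        exact hωB ((pt_event_eq (fun t => X t ω) a (T / 2) lam (DSet a (T / 2))
          (DSet_subset _ _) (fun h => DSet_mem_right h) (DSet_dense _ _)
          (fun t ht => hcadlag ω t (le_trans ha ht.1))).mpr hcon)
      push_neg at hnot
      obtain ⟨t, ht, hlt⟩ := hnot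
      rw [hDe] at ht
      obtain ⟨i, rfl⟩ := ht
      exact mem_iUnion.mpr ⟨i, hω, ⟨e i, by
        simp only [hG, Finset.mem_image, Finset.mem_range]
        exact ⟨i, by omega, rfl⟩, hlt⟩⟩
  -- finite-grid bound
  have hkey : ∀ nn, μ (E nn) ≤ μ B := by
    intro nn
    set Gf := G nn with hGf
    have hGfa : ∀ y ∈ Gf, a ≤ y := fun y hy => (DSet_subset _ _ (hGmem nn y hy)).1
    have hGfT : ∀ y ∈ Gf, y ≤ T / 2 := fun y hy => (DSet_subset _ _ (hGmem nn y hy)).2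
    set P : ℝ → Set Ω := fun x => {ω | lam < X x ω ∧ ∀ y ∈ Gf, y < x → X y ω ≤ lam} with hPdef
    set F : ℝ → Set Ω := fun x => {ω | ∀ t ∈ Icc x T, X t ω - X x ω ≤ lam} with hFdef
    have hcov2 : E nn ⊆ ⋃ x ∈ Gf, (P x ∩ F x) := by
      rintro ω ⟨hωA, y0, hy0, hly0⟩
      set Gfl := Gf.filter (fun y => lam < X y ω) with hGfl
      have hne : Gfl.Nonempty := ⟨y0, Finset.mem_filter.mpr ⟨hy0, hly0⟩⟩
      set x := Gfl.min' hne with hx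
      have hxGfl : x ∈ Gfl := Gfl.min'_mem hne
      have hxGf : x ∈ Gf := (Finset.mem_filter.mp hxGfl).1
      have hlx : lam < X x ω := (Finset.mem_filter.mp hxGfl).2
      refine mem_biUnion hxGf ⟨⟨hlx, ?_⟩, ?_⟩
      · intro y hy hyx
        by_contra hcon
        have hyGfl : y ∈ Gfl := Finset.mem_filter.mpr ⟨hy, not_le.mp hcon⟩
        exact absurd (Gfl.min'_le y hyGfl) (not_le.mpr hyx)
      · intro t ht
        have h1 : X t ω ≤ 2 * lam := hωA t ⟨le_trans (hGfa x hxGf) ht.1, ht.2⟩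
        linarith
    have hsum : μ (E nn) ≤ ∑ x ∈ Gf, μ (P x ∩ F x) :=
      le_trans (measure_mono hcov2) (measure_biUnion_finset_le Gf _)
    have hPF : ∀ x ∈ Gf, μ (P x ∩ F x) ≤ μ (P x) * μ B :=
      fun x hx => PF_key hX0 hmeas hcadlag hstat hindep a lam T ha x (hGfa x hx)
        (hGfT x hx) Gf hGfa
    have hPm : ∀ x, MeasurableSet (P x) := by
      intro x
      have h0 : P x = (X x) ⁻¹' (Ioi lam) ∩ ⋂ y ∈ ((Gf.filter (fun y => y < x)) : Set ℝ),
          (X y) ⁻¹' (Iic lam) := by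
        ext ω
        simp only [hPdef, mem_setOf_eq, mem_inter_iff, mem_preimage, mem_Ioi, mem_Iic,
          mem_iInter, Finset.coe_filter, Finset.mem_coe, Finset.mem_filter, mem_setOf_eq]
        constructor
        · rintro ⟨h1, h2⟩
          exact ⟨h1, fun y hy => h2 y hy.1 hy.2⟩
        · rintro ⟨h1, h2⟩
          exact ⟨h1, fun y hy hyx => h2 y ⟨hy, hyx⟩⟩
      rw [h0]
      exact ((hmeas x) measurableSet_Ioi).inter
        (MeasurableSet.biInter (Finset.countable_toSet _)
          (fun y _ => (hmeas y) measurableSet_Iic))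
    have hdisj : (↑Gf : Set ℝ).PairwiseDisjoint P := by
      intro x hx y hy hxy
      have hgen : ∀ u v : ℝ, u ∈ Gf → u < v → Disjoint (P u) (P v) := by
        intro u v huG huv
        rw [Set.disjoint_left]
        rintro ω ⟨hu1, _⟩ ⟨_, hv2⟩
        exact absurd (hv2 u huG huv) (not_le.mpr hu1)
      rcases lt_or_gt_of_ne hxy with h | h
      · exact hgen x y hx h
      · exact (hgen y x hy h).symm
    have hsumP : ∑ x ∈ Gf, μ (P x) ≤ 1 := by
      rw [← measure_biUnion_finset hdisj (fun x _ => hPm x)]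
      exact prob_le_one
    calc μ (E nn) ≤ ∑ x ∈ Gf, μ (P x ∩ F x) := hsum
      _ ≤ ∑ x ∈ Gf, μ (P x) * μ B := Finset.sum_le_sum hPF
      _ = (∑ x ∈ Gf, μ (P x)) * μ B := (Finset.sum_mul _ _ _).symm
      _ ≤ 1 * μ B := mul_le_mul_left hsumP _
      _ = μ B := one_mul _
  -- take limits
  have hUle : μ (⋃ nn, E nn) ≤ μ B := by
    have := tendsto_measure_iUnion_atTop (μ := μ) hEmono
    exact le_of_tendsto this (Filter.Eventually.of_forall hkey)
  calc μ A ≤ μ (B ∪ ⋃ nn, E nn) := measure_mono hcov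
    _ ≤ μ B + μ (⋃ nn, E nn) := measure_union_le _ _
    _ ≤ μ B + μ B := add_le_add le_rfl hUle
    _ = 2 * μ B := (two_mul _).symm

lemma iter_ineq
    (hX0 : ∀ ω, X 0 ω = 0)
    (hmeas : ∀ t, Measurable (X t))
    (hcadlag : ∀ ω, ∀ t ≥ (0 : ℝ),
      Filter.Tendsto (fun s => X s ω) (nhdsWithin t (Set.Ici t)) (nhds (X t ω)))
    (hstat : ∀ s t : ℝ, 0 ≤ s → 0 ≤ t →
      IdentDistrib (fun ω => X (s + t) ω - X s ω) (X t) μ μ)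
    (hindep : ∀ (n : ℕ) (τ : ℕ → ℝ), Monotone τ → (∀ i, 0 ≤ τ i) →
      iIndepFun
        (fun i : Fin n => fun ω => X (τ (i + 1)) ω - X (τ i) ω) μ)
    (a lam : ℝ) (ha : 0 ≤ a) (k : ℕ) :
    ∀ T : ℝ, a ≤ T / 2 ^ k →
    μ {ω | ∀ t ∈ Icc a T, X t ω ≤ 2 ^ k * lam}
      ≤ 2 ^ k * μ {ω | ∀ t ∈ Icc a (T / 2 ^ k), X t ω ≤ lam} := by
  induction k with
  | zero =>
    intro T hT
    simp only [pow_zero, one_mul, div_one]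
    exact le_refl _
  | succ k ih =>
    intro T hT
    have h2k : (0:ℝ) < 2 ^ k := by positivity
    have h2k1 : (0:ℝ) < 2 ^ (k+1) := by positivity
    have hT0 : 0 ≤ T := by
      have h : (0:ℝ) ≤ T / 2 ^ (k+1) := le_trans ha hT
      have h2 := mul_nonneg h (le_of_lt h2k1)
      rwa [div_mul_cancel₀ _ (ne_of_gt h2k1)] at h2
    have hdiv : T / 2 ^ (k + 1) = (T / 2) / 2 ^ k := by
      rw [div_div]
      ring_nf
    have haT2 : a ≤ T / 2 := by
      refine le_trans hT ?_
      rw [div_le_div_iff₀ h2k1 (by norm_num : (0:ℝ) < 2)]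
      nlinarith [pow_le_pow_right₀ (by norm_num : (1:ℝ) ≤ 2) (Nat.le_add_left 1 k)]
    have hstep := step_ineq hX0 hmeas hcadlag hstat hindep a (2 ^ k * lam) T ha haT2
    have hlev : (2:ℝ) ^ (k+1) * lam = 2 * (2 ^ k * lam) := by ring
    rw [hlev]
    refine le_trans hstep ?_
    have hih := ih (T / 2) (by rw [← hdiv]; exact hT)
    calc 2 * μ {ω | ∀ t ∈ Icc a (T / 2), X t ω ≤ 2 ^ k * lam}
        ≤ 2 * (2 ^ k * μ {ω | ∀ t ∈ Icc a ((T / 2) / 2 ^ k), X t ω ≤ lam}) :=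
          mul_le_mul_right hih _
      _ = 2 ^ (k + 1) * μ {ω | ∀ t ∈ Icc a (T / 2 ^ (k + 1)), X t ω ≤ lam} := by
          rw [hdiv, pow_succ, mul_assoc]
          ring_nf

lemma half_abstract (Qu Qv : ℝ → ENNReal) (k : ℕ) (δ : ℝ)
    (hune : ∀ T, Qu T ≠ ⊤) (hvne : ∀ T, Qv T ≠ ⊤)
    (huv : ∀ T, Qu T ≤ Qv T)
    (hanti : ∀ T₁ T₂, T₁ ≤ T₂ → Qu T₂ ≤ Qu T₁)
    (hineq : ∀ᶠ T in atTop, Qv T ≤ 2 ^ k * Qu (T / 2 ^ k))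
    (H : Tendsto (fun T => Real.log (Qu T).toReal / Real.log T) atTop (nhds (-δ))) :
    Tendsto (fun T => Real.log (Qv T).toReal / Real.log T) atTop (nhds (-δ)) := by
  have h2kR : (0:ℝ) < 2 ^ k := by positivity
  have hdivtop : Tendsto (fun T : ℝ => T / 2 ^ k) atTop atTop :=
    Tendsto.atTop_div_const h2kR tendsto_id
  by_cases hz : ∀ T, Qu T ≠ 0
  · have hQuR : ∀ T, 0 < (Qu T).toReal := fun T => ENNReal.toReal_pos (hz T) (hune T)
    have hQvR : ∀ T, 0 < (Qv T).toReal := fun T =>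
      ENNReal.toReal_pos (fun h => hz T (le_antisymm (h ▸ huv T) (zero_le))) (hvne T)
    have hlow : ∀ᶠ T in atTop, Real.log (Qu T).toReal / Real.log T
        ≤ Real.log (Qv T).toReal / Real.log T := by
      filter_upwards [eventually_gt_atTop 1] with T hT
      have hlogT : 0 < Real.log T := Real.log_pos hT
      have h1 : Real.log (Qu T).toReal ≤ Real.log (Qv T).toReal :=
        Real.log_le_log (hQuR T) ((ENNReal.toReal_le_toReal (hune T) (hvne T)).mpr (huv T))
      exact div_le_div_of_nonneg_right h1 hlogT.le
    set upper : ℝ → ℝ := fun T =>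
      ((k : ℝ) * Real.log 2 + Real.log ((Qu (T / 2 ^ k)).toReal)) / Real.log T with hupperdef
    have hup : ∀ᶠ T in atTop, Real.log (Qv T).toReal / Real.log T ≤ upper T := by
      filter_upwards [hineq, eventually_gt_atTop 1] with T hiT hT
      have hlogT : 0 < Real.log T := Real.log_pos hT
      have h2 : (Qv T).toReal ≤ 2 ^ k * (Qu (T / 2 ^ k)).toReal := by
        have h5 := (ENNReal.toReal_le_toReal (hvne T)
          (ENNReal.mul_ne_top (by simp) (hune _))).mpr hiT
        rwa [ENNReal.toReal_mul, (by simp : ((2 : ENNReal) ^ k).toReal = 2 ^ k)] at h5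
      have h3 : Real.log (Qv T).toReal ≤ Real.log ((2:ℝ) ^ k * (Qu (T / 2 ^ k)).toReal) :=
        Real.log_le_log (hQvR T) h2
      have h4 : Real.log ((2:ℝ) ^ k * (Qu (T / 2 ^ k)).toReal)
          = (k : ℝ) * Real.log 2 + Real.log ((Qu (T / 2 ^ k)).toReal) := by
        rw [Real.log_mul (by positivity) (ne_of_gt (hQuR _)), Real.log_pow]
      rw [hupperdef]
      exact div_le_div_of_nonneg_right (h3.trans_eq h4) hlogT.le
    have hc0 : Tendsto (fun T : ℝ => (k : ℝ) * Real.log 2 / Real.log T) atTop (nhds 0) :=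
      Tendsto.const_div_atTop Real.tendsto_log_atTop _
    have hcomp : Tendsto (fun T => Real.log ((Qu (T / 2 ^ k)).toReal) / Real.log (T / 2 ^ k))
        atTop (nhds (-δ)) := H.comp hdivtop
    have hlogratio : Tendsto (fun T => Real.log (T / 2 ^ k) / Real.log T) atTop (nhds 1) := by
      have hev : ∀ᶠ T in atTop, 1 - (k : ℝ) * Real.log 2 / Real.log T
          = Real.log (T / 2 ^ k) / Real.log T := by
        filter_upwards [eventually_gt_atTop 1] with T hT
        have hT0 : (0:ℝ) < T := lt_trans one_pos hT
        have hlogT : Real.log T ≠ 0 := ne_of_gt (Real.log_pos hT)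
        rw [Real.log_div (ne_of_gt hT0) (by positivity), Real.log_pow, sub_div, div_self hlogT]
      refine Tendsto.congr' hev ?_
      have h6 := (tendsto_const_nhds (x := (1:ℝ)) (f := atTop)).sub hc0
      simpa using h6
    have huppertend : Tendsto upper atTop (nhds (-δ)) := by
      have hev : ∀ᶠ T in atTop, (k : ℝ) * Real.log 2 / Real.log T
          + (Real.log ((Qu (T / 2 ^ k)).toReal) / Real.log (T / 2 ^ k))
            * (Real.log (T / 2 ^ k) / Real.log T) = upper T := by
        filter_upwards [eventually_gt_atTop (2 ^ k : ℝ)] with T hT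
        have h1k : (1:ℝ) ≤ 2 ^ k := one_le_pow₀ (by norm_num)
        have hT1 : (1:ℝ) < T := lt_of_le_of_lt h1k hT
        have hlogT : Real.log T ≠ 0 := ne_of_gt (Real.log_pos hT1)
        have hTdiv : 1 < T / 2 ^ k := (one_lt_div h2kR).mpr hT
        have hlogS : Real.log (T / 2 ^ k) ≠ 0 := ne_of_gt (Real.log_pos hTdiv)
        rw [hupperdef]
        field_simp
      refine Tendsto.congr' hev ?_
      have h7 := hc0.add (hcomp.mul hlogratio)
      simpa using h7
    exact tendsto_of_tendsto_of_tendsto_of_le_of_le' H huppertend hlow hup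
  · push_neg at hz
    obtain ⟨T₀, hT₀⟩ := hz
    have huev : ∀ᶠ T in atTop, Qu T = 0 :=
      eventually_atTop.mpr ⟨T₀, fun T hT => le_antisymm (hT₀ ▸ hanti T₀ T hT) (zero_le)⟩
    have hδ0 : -δ = 0 := by
      have hev : (fun T => Real.log (Qu T).toReal / Real.log T) =ᶠ[atTop]
          (fun _ => (0:ℝ)) := by
        filter_upwards [huev] with T hT
        rw [hT]; simp
      exact tendsto_nhds_unique (Tendsto.congr' hev H) tendsto_const_nhds
    have hvev : ∀ᶠ T in atTop, Qv T = 0 := by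
      filter_upwards [hineq, hdivtop.eventually huev] with T h1 h2
      rw [h2, mul_zero] at h1
      exact le_antisymm h1 (zero_le)
    rw [hδ0]
    have hev2 : (fun _ => (0:ℝ)) =ᶠ[atTop] fun T => Real.log (Qv T).toReal / Real.log T := by
      filter_upwards [hvev] with T hT
      rw [hT]; simp
    exact Tendsto.congr' hev2 tendsto_const_nhds

lemma half_abstract' (Qu Qv : ℝ → ENNReal) (k : ℕ) (δ : ℝ)
    (hune : ∀ T, Qu T ≠ ⊤) (hvne : ∀ T, Qv T ≠ ⊤)
    (huv : ∀ T, Qu T ≤ Qv T)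
    (hanti : ∀ T₁ T₂, T₁ ≤ T₂ → Qu T₂ ≤ Qu T₁)
    (hineq : ∀ᶠ T in atTop, Qv (2 ^ k * T) ≤ 2 ^ k * Qu T)
    (hineq2 : ∀ᶠ T in atTop, Qv T ≤ 2 ^ k * Qu (T / 2 ^ k))
    (H : Tendsto (fun T => Real.log (Qv T).toReal / Real.log T) atTop (nhds (-δ))) :
    Tendsto (fun T => Real.log (Qu T).toReal / Real.log T) atTop (nhds (-δ)) := by
  have h2kR : (0:ℝ) < 2 ^ k := by positivity
  have hmultop : Tendsto (fun T : ℝ => 2 ^ k * T) atTop atTop :=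
    Tendsto.const_mul_atTop h2kR tendsto_id
  have hdivtop : Tendsto (fun T : ℝ => T / 2 ^ k) atTop atTop :=
    Tendsto.atTop_div_const h2kR tendsto_id
  by_cases hz : ∀ T, Qu T ≠ 0
  · have hQuR : ∀ T, 0 < (Qu T).toReal := fun T => ENNReal.toReal_pos (hz T) (hune T)
    have hQvR : ∀ T, 0 < (Qv T).toReal := fun T =>
      ENNReal.toReal_pos (fun h => hz T (le_antisymm (h ▸ huv T) (zero_le))) (hvne T)
    have hup : ∀ᶠ T in atTop, Real.log (Qu T).toReal / Real.log T
        ≤ Real.log (Qv T).toReal / Real.log T := by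
      filter_upwards [eventually_gt_atTop 1] with T hT
      have hlogT : 0 < Real.log T := Real.log_pos hT
      have h1 : Real.log (Qu T).toReal ≤ Real.log (Qv T).toReal :=
        Real.log_le_log (hQuR T) ((ENNReal.toReal_le_toReal (hune T) (hvne T)).mpr (huv T))
      exact div_le_div_of_nonneg_right h1 hlogT.le
    set lower : ℝ → ℝ := fun T =>
      (Real.log ((Qv (2 ^ k * T)).toReal) - (k : ℝ) * Real.log 2) / Real.log T with hlowerdef
    have hlow : ∀ᶠ T in atTop, lower T ≤ Real.log (Qu T).toReal / Real.log T := by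
      filter_upwards [hineq, eventually_gt_atTop 1] with T hiT hT
      have hlogT : 0 < Real.log T := Real.log_pos hT
      have h2 : (Qv (2 ^ k * T)).toReal ≤ 2 ^ k * (Qu T).toReal := by
        have h5 := (ENNReal.toReal_le_toReal (hvne _)
          (ENNReal.mul_ne_top (by simp) (hune _))).mpr hiT
        rwa [ENNReal.toReal_mul, (by simp : ((2 : ENNReal) ^ k).toReal = 2 ^ k)] at h5
      have h3 : Real.log (Qv (2 ^ k * T)).toReal ≤ Real.log ((2:ℝ) ^ k * (Qu T).toReal) :=
        Real.log_le_log (hQvR _) h2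
      have h4 : Real.log ((2:ℝ) ^ k * (Qu T).toReal)
          = (k : ℝ) * Real.log 2 + Real.log ((Qu T).toReal) := by
        rw [Real.log_mul (by positivity) (ne_of_gt (hQuR _)), Real.log_pow]
      rw [hlowerdef]
      have h6 : Real.log ((Qv (2 ^ k * T)).toReal) - (k : ℝ) * Real.log 2
          ≤ Real.log ((Qu T).toReal) := by
        rw [h4] at h3; linarith
      exact div_le_div_of_nonneg_right h6 hlogT.le
    have hc0 : Tendsto (fun T : ℝ => (k : ℝ) * Real.log 2 / Real.log T) atTop (nhds 0) :=
      Tendsto.const_div_atTop Real.tendsto_log_atTop _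
    have hcomp : Tendsto (fun T => Real.log ((Qv (2 ^ k * T)).toReal) / Real.log (2 ^ k * T))
        atTop (nhds (-δ)) := H.comp hmultop
    have hlogratio : Tendsto (fun T => Real.log (2 ^ k * T) / Real.log T) atTop (nhds 1) := by
      have hev : ∀ᶠ T in atTop, 1 + (k : ℝ) * Real.log 2 / Real.log T
          = Real.log (2 ^ k * T) / Real.log T := by
        filter_upwards [eventually_gt_atTop 1] with T hT
        have hT0 : (0:ℝ) < T := lt_trans one_pos hT
        have hlogT : Real.log T ≠ 0 := ne_of_gt (Real.log_pos hT)
        rw [Real.log_mul (by positivity) (ne_of_gt hT0), Real.log_pow, add_div,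
          div_self hlogT, add_comm]
      refine Tendsto.congr' hev ?_
      have h6 := (tendsto_const_nhds (x := (1:ℝ)) (f := atTop)).add hc0
      simpa using h6
    have hlowertend : Tendsto lower atTop (nhds (-δ)) := by
      have hev : ∀ᶠ T in atTop,
          (Real.log ((Qv (2 ^ k * T)).toReal) / Real.log (2 ^ k * T))
            * (Real.log (2 ^ k * T) / Real.log T)
          - (k : ℝ) * Real.log 2 / Real.log T = lower T := by
        filter_upwards [eventually_gt_atTop 1] with T hT
        have hT0 : (0:ℝ) < T := lt_trans one_pos hT
        have hlogT : Real.log T ≠ 0 := ne_of_gt (Real.log_pos hT)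
        have h1k : (1:ℝ) ≤ 2 ^ k := one_le_pow₀ (by norm_num)
        have hTmul : 1 < 2 ^ k * T := by nlinarith
        have hlogS : Real.log (2 ^ k * T) ≠ 0 := ne_of_gt (Real.log_pos hTmul)
        rw [hlowerdef]
        field_simp
      refine Tendsto.congr' hev ?_
      have h7 := (hcomp.mul hlogratio).sub hc0
      simpa using h7
    exact tendsto_of_tendsto_of_tendsto_of_le_of_le' hlowertend H hlow hup
  · push_neg at hz
    obtain ⟨T₀, hT₀⟩ := hz
    have huev : ∀ᶠ T in atTop, Qu T = 0 :=
      eventually_atTop.mpr ⟨T₀, fun T hT => le_antisymm (hT₀ ▸ hanti T₀ T hT) (zero_le)⟩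
    have hvev : ∀ᶠ T in atTop, Qv T = 0 := by
      filter_upwards [hineq2, hdivtop.eventually huev] with T h1 h2
      rw [h2, mul_zero] at h1
      exact le_antisymm h1 (zero_le)
    have hδ0 : -δ = 0 := by
      have hev : (fun T => Real.log (Qv T).toReal / Real.log T) =ᶠ[atTop]
          (fun _ => (0:ℝ)) := by
        filter_upwards [hvev] with T hT
        rw [hT]; simp
      exact tendsto_nhds_unique (Tendsto.congr' hev H) tendsto_const_nhds
    rw [hδ0]
    have hev2 : (fun _ => (0:ℝ)) =ᶠ[atTop] fun T => Real.log (Qu T).toReal / Real.log T := by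
      filter_upwards [huev] with T hT
      rw [hT]; simp
    exact Tendsto.congr' hev2 tendsto_const_nhds


end AuxStmt6

theorem stmt6 {Ω : Type*} [MeasurableSpace Ω] (μ : Measure Ω) [IsProbabilityMeasure μ]
    (X : ℝ → Ω → ℝ)
    (hX0 : ∀ ω, X 0 ω = 0)
    (hmeas : ∀ t, Measurable (X t))
    (hcadlag : ∀ ω, ∀ t ≥ (0:ℝ),
      Filter.Tendsto (fun s => X s ω) (nhdsWithin t (Set.Ici t)) (nhds (X t ω)))
    (hstat : ∀ s t : ℝ, 0 ≤ s → 0 ≤ t →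
      IdentDistrib (fun ω => X (s + t) ω - X s ω) (X t) μ μ)
    (hindep : ∀ (n : ℕ) (τ : ℕ → ℝ), Monotone τ → (∀ i, 0 ≤ τ i) →
      iIndepFun
        (fun i : Fin n => fun ω => X (τ (i + 1)) ω - X (τ i) ω) μ)
    (δ : ℝ) (hδ : 0 ≤ δ) (a : ℝ) (ha : 0 ≤ a) (c : ℝ) (hc : 0 < c) :
    Tendsto (fun T : ℝ =>
        Real.log ((μ {ω | ∀ t ∈ Icc a T, X t ω ≤ 1}).toReal) / Real.log T)
      atTop (nhds (-δ))
    ↔ Tendsto (fun T : ℝ =>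
        Real.log ((μ {ω | ∀ t ∈ Icc a T, X t ω ≤ c}).toReal) / Real.log T)
      atTop (nhds (-δ)) := by
  set Q : ℝ → ℝ → ENNReal := fun lam T => μ {ω | ∀ t ∈ Icc a T, X t ω ≤ lam} with hQ
  have hne : ∀ lam T, Q lam T ≠ ⊤ := fun lam T => measure_ne_top μ _
  have hanti : ∀ (lam : ℝ), ∀ T₁ T₂ : ℝ, T₁ ≤ T₂ → Q lam T₂ ≤ Q lam T₁ :=
    fun lam T₁ T₂ h => measure_mono (fun ω hω t ht => hω t ⟨ht.1, le_trans ht.2 h⟩)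
  have hlev : ∀ (l₁ l₂ : ℝ), l₁ ≤ l₂ → ∀ T : ℝ, Q l₁ T ≤ Q l₂ T :=
    fun l₁ l₂ h T => measure_mono (fun ω hω t ht => le_trans (hω t ht) h)
  have hmain : ∀ (u v : ℝ) (k : ℕ), v ≤ 2 ^ k * u →
      ∀ᶠ T in atTop, Q v T ≤ 2 ^ k * Q u (T / 2 ^ k) := by
    intro u v k hk
    have h2k : (0:ℝ) < 2 ^ k := by positivity
    filter_upwards [eventually_ge_atTop (2 ^ k * a)] with T hT
    have haT : a ≤ T / 2 ^ k := by
      rw [le_div_iff₀ h2k]; linarith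
    calc Q v T ≤ Q (2 ^ k * u) T := hlev _ _ hk T
      _ ≤ 2 ^ k * Q u (T / 2 ^ k) :=
          iter_ineq hX0 hmeas hcadlag hstat hindep a u ha k T haT
  have hmain' : ∀ (u v : ℝ) (k : ℕ), v ≤ 2 ^ k * u →
      ∀ᶠ T in atTop, Q v (2 ^ k * T) ≤ 2 ^ k * Q u T := by
    intro u v k hk
    have h2k : (0:ℝ) < 2 ^ k := by positivity
    filter_upwards [eventually_ge_atTop a] with T hT
    have hdiv : (2 ^ k * T) / 2 ^ k = T := by
      field_simp
    have haT : a ≤ (2 ^ k * T) / 2 ^ k := by rw [hdiv]; exact hT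
    calc Q v (2 ^ k * T) ≤ Q (2 ^ k * u) (2 ^ k * T) := hlev _ _ hk _
      _ ≤ 2 ^ k * Q u ((2 ^ k * T) / 2 ^ k) :=
          iter_ineq hX0 hmeas hcadlag hstat hindep a u ha k _ haT
      _ = 2 ^ k * Q u T := by rw [hdiv]
  rcases le_total 1 c with h1c | hc1
  · -- 1 ≤ c : u = 1, v = c
    obtain ⟨k, hkgt⟩ := pow_unbounded_of_one_lt c (by norm_num : (1:ℝ) < 2)
    have hk : c ≤ 2 ^ k * 1 := by rw [mul_one]; exact le_of_lt hkgt
    constructor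
    · intro H
      exact half_abstract (Q 1) (Q c) k δ (hne 1) (hne c) (fun T => hlev 1 c h1c T)
        (hanti 1) (hmain 1 c k hk) H
    · intro H
      exact half_abstract' (Q 1) (Q c) k δ (hne 1) (hne c) (fun T => hlev 1 c h1c T)
        (hanti 1) (hmain' 1 c k hk) (hmain 1 c k hk) H
  · -- c ≤ 1 : u = c, v = 1
    obtain ⟨k, hkgt⟩ := pow_unbounded_of_one_lt (1 / c) (by norm_num : (1:ℝ) < 2)
    have hk : 1 ≤ 2 ^ k * c := by
      rw [div_lt_iff₀ hc] at hkgt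
      nlinarith
    constructor
    · intro H
      exact half_abstract' (Q c) (Q 1) k δ (hne c) (hne 1) (fun T => hlev c 1 hc1 T)
        (hanti c) (hmain' c 1 k hk) (hmain c 1 k hk) H
    · intro H
      exact half_abstract (Q c) (Q 1) k δ (hne c) (hne 1) (fun T => hlev c 1 hc1 T)
        (hanti c) (hmain c 1 k hk) H
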